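/- For every n ≥ 1 and every ξ ∈ ℂ with |ξ − z₁| = ρ₁, one has conj(q₁,ₙ(ξ)) = κ₂,ₙ₊₁/(ξ − z₁,ₙ) − conj(α₁,ₙ); equivalently, conj(κ₁,ₙ)/conj(ξ − z₂,ₙ₋₁) = −2·conj(α₁,ₙ) + κ₂,ₙ₊₁/(ξ − z₁,ₙ). -/

import Mathlib

lemma conj_density_aux_main (K u w cu cw LC Λ₁C ρC ρ₁C : ℂ)
    (hcu : cu * u = ρ₁C ^ 2) (hwcw : w * cw = ρC ^ 2) (hΛ : Λ₁C * ρC ^ 2 = ρ₁C ^ 2)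
    (hL : LC ≠ 0) (hcw : cw ≠ 0)
    (hcd1 : cu + LC * cw ≠ 0) (hd2 : u + Λ₁C / LC * w ≠ 0) :
    K / (cu + LC * cw) =
      -2 * (-K / (2 * LC * cw)) + -Λ₁C * K * w / (LC ^ 2 * cw) / (u + Λ₁C / LC * w) := by
  have this1 : u + Λ₁C / LC * w = (LC * u + Λ₁C * w) / LC := by field_simp
  have hd2' : LC * u + Λ₁C * w ≠ 0 := by
    intro h
    apply hd2
    rw [this1, h]
    simp
  have hLcw : LC * cw ≠ 0 := mul_ne_zero hL hcw
  have hn1 : LC ^ 2 * cw * (LC * u + Λ₁C * w) ≠ 0 :=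
    mul_ne_zero (mul_ne_zero (pow_ne_zero 2 hL) hcw) hd2'
  have hn2 : LC * cw * (LC * u + Λ₁C * w) ≠ 0 := mul_ne_zero hLcw hd2'
  have e1 : -2 * (-K / (2 * LC * cw)) = K / (LC * cw) := by
    field_simp
  have e2 : -Λ₁C * K * w / (LC ^ 2 * cw) / (u + Λ₁C / LC * w) =
      -Λ₁C * K * w / (LC * cw * (LC * u + Λ₁C * w)) := by
    rw [this1, div_div_eq_mul_div, div_mul_eq_mul_div, div_div,
      div_eq_div_iff hn1 hn2]
    ring
  rw [e1, e2, div_add_div _ _ hLcw hn2, div_eq_div_iff hcd1 (mul_ne_zero hLcw hn2)]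
  linear_combination K * LC ^ 2 * cw * Λ₁C * hwcw + K * LC ^ 2 * cw * hΛ - K * LC ^ 2 * cw * hcu

set_option maxHeartbeats 1000000 in
theorem conj_density_identity_on_circle
    (z₁ z₂ : ℂ) (hz : z₁ ≠ z₂) (ρ ρ₁ ρ₂ : ℝ)
    (hρ : ρ = ‖z₁ - z₂‖)
    (hρ₁ : 0 < ρ₁) (hρ₂ : 0 < ρ₂) (hsum : ρ₁ + ρ₂ < ρ)
    (Λ₁ Λ₂ Λ : ℝ) (hΛ₁ : Λ₁ = (ρ₁ / ρ) ^ 2) (hΛ₂ : Λ₂ = (ρ₂ / ρ) ^ 2)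
    (hΛ : Λ = (Λ₁ - Λ₂) ^ 2 + 1 - 2 * (Λ₁ + Λ₂))
    (l₁ l₂ : ℕ → ℝ) (hl₁0 : l₁ 0 = 1) (hl₂0 : l₂ 0 = 1)
    (hl₁ : ∀ n : ℕ, l₁ (n + 1) = 1 - Λ₂ / l₂ n)
    (hl₂ : ∀ n : ℕ, l₂ (n + 1) = 1 - Λ₁ / l₁ n)
    (κ₁ κ₂ : ℕ → ℂ)
    (hκ₁1 : κ₁ 1 = ((2 * ρ₂ ^ 2 : ℝ) : ℂ))
    (hκ₁2 : κ₁ 2 = -(2 * (((ρ₁ * ρ₂ : ℝ)) : ℂ) ^ 2) / (starRingEnd ℂ (z₂ - z₁)) ^ 2)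
    (hκ₁rec : ∀ n : ℕ, 1 ≤ n →
      κ₁ (n + 2) = ((Λ₁ * Λ₂ / (l₂ n * l₁ (n - 1)) ^ 2 : ℝ) : ℂ) * κ₁ n)
    (hκ₂1 : κ₂ 1 = ((2 * ρ₁ ^ 2 : ℝ) : ℂ))
    (hκ₂2 : κ₂ 2 = -(2 * (((ρ₁ * ρ₂ : ℝ)) : ℂ) ^ 2) / (starRingEnd ℂ (z₁ - z₂)) ^ 2)
    (hκ₂rec : ∀ n : ℕ, 1 ≤ n →
      κ₂ (n + 2) = ((Λ₁ * Λ₂ / (l₁ n * l₂ (n - 1)) ^ 2 : ℝ) : ℂ) * κ₂ n)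
    (z1s z2s : ℕ → ℂ)
    (hz1s : ∀ n : ℕ, z1s n = ((1 - l₂ n : ℝ) : ℂ) * z₂ + ((l₂ n : ℝ) : ℂ) * z₁)
    (hz2s : ∀ n : ℕ, z2s n = ((1 - l₁ n : ℝ) : ℂ) * z₁ + ((l₁ n : ℝ) : ℂ) * z₂)
    (α₁ : ℕ → ℂ)
    (hα₁ : ∀ n : ℕ, 1 ≤ n →
      α₁ n = -κ₁ n / (2 * ((l₁ (n - 1) : ℝ) : ℂ) * (z₁ - z₂)))
    (q₁ : ℕ → ℂ → ℂ)
    (hq₁0 : ∀ z : ℂ, q₁ 0 z = 2 * (z - z₁))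
    (hq₁ : ∀ n : ℕ, 1 ≤ n → ∀ z : ℂ, q₁ n z = κ₁ n / (z - z2s (n - 1)) + α₁ n)
    :
    ∀ n : ℕ, 1 ≤ n → ∀ ξ : ℂ, ‖ξ - z₁‖ = ρ₁ →
      starRingEnd ℂ (q₁ n ξ) = κ₂ (n + 1) / (ξ - z1s n) - starRingEnd ℂ (α₁ n) ∧
      starRingEnd ℂ (κ₁ n) / starRingEnd ℂ (ξ - z2s (n - 1)) =
        -2 * starRingEnd ℂ (α₁ n) + κ₂ (n + 1) / (ξ - z1s n) := by
  have hρ0 : 0 < ρ := lt_trans (by positivity) hsum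
  have hab : ρ₁ / ρ + ρ₂ / ρ < 1 := by
    rw [← add_div, div_lt_one hρ0]; exact hsum
  have ha0 : 0 < ρ₁ / ρ := div_pos hρ₁ hρ0
  have hb0 : 0 < ρ₂ / ρ := div_pos hρ₂ hρ0
  -- lower bounds for the lambda sequences
  have hlb : ∀ m : ℕ, 1 - ρ₂ / ρ ≤ l₁ m ∧ 1 - ρ₁ / ρ ≤ l₂ m := by
    intro m
    induction m with
    | zero => rw [hl₁0, hl₂0]; constructor <;> linarith
    | succ k ih =>
      obtain ⟨ih1, ih2⟩ := ih
      have h1p : 0 < l₁ k := by linarith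
      have h2p : 0 < l₂ k := by linarith
      constructor
      · rw [hl₁ k, hΛ₂]
        have h : (ρ₂ / ρ) ^ 2 / l₂ k ≤ ρ₂ / ρ := by
          rw [div_le_iff₀ h2p]
          nlinarith
        linarith
      · rw [hl₂ k, hΛ₁]
        have h : (ρ₁ / ρ) ^ 2 / l₁ k ≤ ρ₁ / ρ := by
          rw [div_le_iff₀ h1p]
          nlinarith
        linarith
  have hl₁pos : ∀ m : ℕ, 0 < l₁ m := fun m => by have := (hlb m).1; linarith
  have hl₂pos : ∀ m : ℕ, 0 < l₂ m := fun m => by have := (hlb m).2; linarith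
  have hl₁gt : ∀ m : ℕ, ρ₁ / ρ < l₁ m := fun m => by have := (hlb m).1; linarith
  -- basic complex facts
  have hw : z₁ - z₂ ≠ 0 := sub_ne_zero.mpr hz
  have hw' : z₂ - z₁ = -(z₁ - z₂) := by ring
  have hcw : starRingEnd ℂ (z₁ - z₂) ≠ 0 := by
    simpa using (map_ne_zero (starRingEnd ℂ)).mpr hw
  have hwcw : (z₁ - z₂) * starRingEnd ℂ (z₁ - z₂) = ((ρ : ℝ) : ℂ) ^ 2 := by
    rw [Complex.mul_conj]
    rw [← Complex.sq_norm, ← hρ]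
    push_cast
    ring
  have hΛ₁C : ((Λ₁ : ℝ) : ℂ) * ((ρ : ℝ) : ℂ) ^ 2 = ((ρ₁ : ℝ) : ℂ) ^ 2 := by
    have h : Λ₁ * ρ ^ 2 = ρ₁ ^ 2 := by
      rw [hΛ₁]; field_simp
    exact_mod_cast congrArg (fun x : ℝ => (x : ℂ)) h
  have hΛ₂C : ((Λ₂ : ℝ) : ℂ) * ((ρ : ℝ) : ℂ) ^ 2 = ((ρ₂ : ℝ) : ℂ) ^ 2 := by
    have h : Λ₂ * ρ ^ 2 = ρ₂ ^ 2 := by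
      rw [hΛ₂]; field_simp
    exact_mod_cast congrArg (fun x : ℝ => (x : ℂ)) h
  have hρC : ((ρ : ℝ) : ℂ) ≠ 0 := by exact_mod_cast hρ0.ne'
  -- key identity for κ₂ in terms of conj κ₁
  have hkey2 : ∀ m : ℕ,
      (κ₂ (m + 2) = -((Λ₁ : ℝ) : ℂ) * starRingEnd ℂ (κ₁ (m + 1)) * (z₁ - z₂) /
        (((l₁ m : ℝ) : ℂ) ^ 2 * starRingEnd ℂ (z₁ - z₂))) ∧
      (κ₂ (m + 3) = -((Λ₁ : ℝ) : ℂ) * starRingEnd ℂ (κ₁ (m + 2)) * (z₁ - z₂) /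
        (((l₁ (m + 1) : ℝ) : ℂ) ^ 2 * starRingEnd ℂ (z₁ - z₂))) := by
    intro m
    induction m with
    | zero =>
      constructor
      · rw [hκ₂2, hκ₁1, hl₁0, Complex.conj_ofReal]
        set cw0 := starRingEnd ℂ (z₁ - z₂) with hcw0
        field_simp
        push_cast
        linear_combination (2*(ρ₂:ℂ)^2*(Λ₁:ℂ))*hwcw + (2*(ρ₂:ℂ)^2)*hΛ₁C
      · have hrec := hκ₂rec 1 le_rfl
        norm_num at hrec
        rw [hrec, hκ₂1, hκ₁2, hl₂0]
        have hl11 : ((l₁ 1 : ℝ) : ℂ) ≠ 0 := by exact_mod_cast (hl₁pos 1).ne'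
        have hconj : starRingEnd ℂ (-(2 * (((ρ₁ * ρ₂ : ℝ)) : ℂ) ^ 2) /
            (starRingEnd ℂ (z₂ - z₁)) ^ 2) =
            -(2 * (((ρ₁ * ρ₂ : ℝ)) : ℂ) ^ 2) / (z₂ - z₁) ^ 2 := by
          rw [map_div₀, map_neg, map_mul, map_pow, map_pow, Complex.conj_conj,
            Complex.conj_ofReal, map_ofNat]
        rw [hconj, hw']
        set w0 := z₁ - z₂ with hw0
        set cw0 := starRingEnd ℂ w0 with hcw0
        have hnw : (-w0) ^ 2 = w0 ^ 2 := by ring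
        rw [hnw]
        norm_num
        field_simp
        linear_combination ((Λ₁:ℂ)*(ρ₁:ℂ)^2*(Λ₂:ℂ)) * hwcw +
          ((Λ₁:ℂ)*(ρ₁:ℂ)^2) * hΛ₂C
    | succ k ih =>
      obtain ⟨ih1, ih2⟩ := ih
      refine ⟨ih2, ?_⟩
      have hrec2 : κ₂ (k + 4) = ((Λ₁ * Λ₂ / (l₁ (k + 2) * l₂ (k + 1)) ^ 2 : ℝ) : ℂ) * κ₂ (k + 2) := by
        have := hκ₂rec (k + 2) (by omega)
        simpa using this
      have hrec1 : κ₁ (k + 3) = ((Λ₁ * Λ₂ / (l₂ (k + 1) * l₁ k) ^ 2 : ℝ) : ℂ) * κ₁ (k + 1) := by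
        have := hκ₁rec (k + 1) (by omega)
        simpa using this
      have hgoal : κ₂ (k + 1 + 3) = κ₂ (k + 4) := by norm_num
      rw [hgoal, hrec2, ih1, hrec1, map_mul, Complex.conj_ofReal]
      have h1 : ((l₁ k : ℝ) : ℂ) ≠ 0 := by exact_mod_cast (hl₁pos k).ne'
      have h2 : ((l₂ (k + 1) : ℝ) : ℂ) ≠ 0 := by exact_mod_cast (hl₂pos (k + 1)).ne'
      have h3 : ((l₁ (k + 2) : ℝ) : ℂ) ≠ 0 := by exact_mod_cast (hl₁pos (k + 2)).ne'
      have hgoal2 : l₁ (k + 1 + 1) = l₁ (k + 2) := by norm_num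
      rw [hgoal2]
      push_cast
      field_simp
  have hkey : ∀ m : ℕ, κ₂ (m + 2) = -((Λ₁ : ℝ) : ℂ) * starRingEnd ℂ (κ₁ (m + 1)) * (z₁ - z₂) /
      (((l₁ m : ℝ) : ℂ) ^ 2 * starRingEnd ℂ (z₁ - z₂)) := fun m => (hkey2 m).1
  -- main statement
  intro n hn ξ hξ
  obtain ⟨m, rfl⟩ : ∃ m, n = m + 1 := ⟨n - 1, (Nat.succ_pred_eq_of_pos hn).symm⟩
  have hm1 : m + 1 - 1 = m := rfl
  set u : ℂ := ξ - z₁ with hu_def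
  have hu : u ≠ 0 := by
    intro h
    rw [h] at hξ
    simp at hξ
    linarith
  have hcu : starRingEnd ℂ u * u = ((ρ₁ : ℝ) : ℂ) ^ 2 := by
    rw [mul_comm, Complex.mul_conj, ← Complex.sq_norm, hξ]
    push_cast
    ring
  set L : ℝ := l₁ m with hL_def
  have hLpos : 0 < L := hl₁pos m
  have hLC : ((L : ℝ) : ℂ) ≠ 0 := by exact_mod_cast hLpos.ne'
  have hLgt : ρ₁ < L * ρ := by
    have h := hl₁gt m
    rw [div_lt_iff₀ hρ0] at h
    exact h
  -- denominators
  have hz2m : ξ - z2s m = u + ((L : ℝ) : ℂ) * (z₁ - z₂) := by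
    rw [hz2s m]
    push_cast
    ring
  have hd1 : ξ - z2s m ≠ 0 := by
    rw [hz2m]
    intro h
    have h2 : u = -(((L : ℝ) : ℂ) * (z₁ - z₂)) := by linear_combination h
    have h3 : ‖u‖ = L * ρ := by
      rw [h2, norm_neg, norm_mul, Complex.norm_real, Real.norm_eq_abs, abs_of_pos hLpos, ← hρ]
    rw [hξ] at h3
    linarith
  have hl₂m1 : l₂ (m + 1) = 1 - Λ₁ / L := hl₂ m
  have hz1m : ξ - z1s (m + 1) = u + ((Λ₁ / L : ℝ) : ℂ) * (z₁ - z₂) := by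
    rw [hz1s (m + 1), hl₂m1]
    push_cast
    ring
  have hΛL : 0 < Λ₁ / L := div_pos (by rw [hΛ₁]; positivity) hLpos
  have hΛLρ : Λ₁ / L * ρ < ρ₁ := by
    rw [hΛ₁, div_mul_eq_mul_div, div_lt_iff₀ hLpos]
    have h5 : (ρ₁ / ρ) ^ 2 * ρ = ρ₁ * (ρ₁ / ρ) := by field_simp
    rw [h5]
    have h4 : ρ₁ / ρ < L := hl₁gt m
    nlinarith
  have hd2 : ξ - z1s (m + 1) ≠ 0 := by
    rw [hz1m]
    intro h
    have h2 : u = -(((Λ₁ / L : ℝ) : ℂ) * (z₁ - z₂)) := by linear_combination h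
    have h3 : ‖u‖ = Λ₁ / L * ρ := by
      rw [h2, norm_neg, norm_mul, Complex.norm_real, Real.norm_eq_abs, abs_of_pos hΛL, ← hρ]
    rw [hξ] at h3
    linarith
  -- the second identity
  have hcd1 : starRingEnd ℂ u + ((L : ℝ) : ℂ) * starRingEnd ℂ (z₁ - z₂) ≠ 0 := by
    have h := (map_ne_zero (starRingEnd ℂ)).mpr (hz2m ▸ hd1)
    rwa [map_add, map_mul, Complex.conj_ofReal] at h
  have halpha : starRingEnd ℂ (α₁ (m + 1)) =
      -(starRingEnd ℂ (κ₁ (m + 1))) / (2 * ((L : ℝ) : ℂ) * starRingEnd ℂ (z₁ - z₂)) := by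
    rw [hα₁ (m + 1) (by omega), hm1, map_div₀, map_neg, map_mul, map_mul,
      Complex.conj_ofReal, map_ofNat]
  have key : starRingEnd ℂ (κ₁ (m + 1)) / starRingEnd ℂ (ξ - z2s (m + 1 - 1)) =
      -2 * starRingEnd ℂ (α₁ (m + 1)) + κ₂ (m + 1 + 1) / (ξ - z1s (m + 1)) := by
    rw [hm1, hz2m, map_add, map_mul, Complex.conj_ofReal, halpha]
    have hidx : κ₂ (m + 1 + 1) = κ₂ (m + 2) := rfl
    rw [hidx, hkey m, hz1m]
    have hcast : ((Λ₁ / L : ℝ) : ℂ) = ((Λ₁ : ℝ) : ℂ) / ((L : ℝ) : ℂ) := by push_cast; ring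
    rw [hcast]
    have hd2' : u + ((Λ₁ : ℝ) : ℂ) / ((L : ℝ) : ℂ) * (z₁ - z₂) ≠ 0 := by
      have := hz1m ▸ hd2
      rwa [hcast] at this
    exact conj_density_aux_main (starRingEnd ℂ (κ₁ (m + 1))) u (z₁ - z₂)
      (starRingEnd ℂ u) (starRingEnd ℂ (z₁ - z₂)) ((L : ℝ) : ℂ) ((Λ₁ : ℝ) : ℂ)
      ((ρ : ℝ) : ℂ) ((ρ₁ : ℝ) : ℂ) hcu hwcw hΛ₁C hLC hcw hcd1 hd2'
  refine ⟨?_, key⟩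
  rw [hq₁ (m + 1) (by omega) ξ, map_add, map_div₀, key]
  ring
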